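/- Let a = (a_{i,j}) be an n×r nonnegative integer matrix with nonzero columns, τ and τ_ℚ as above, and let N be a positive integer divisible by the determinant of every square submatrix of a. If w ∈ ℕ^n has all coordinates divisible by N, and w lies in a cone generated by a linearly independent set consisting of some columns a_j (j ∈ I_1) and some standard basis vectors e_i (i ∈ I_2) forming a basis of ℝ^n, then in the expression w = Σ_{j∈I_1} α_j a_j + Σ_{i∈I_2} β_i e_i with α_j, β_i ≥ 0, all α_j and β_i are integers. -/

import Mathlib

private lemma sumInt {ι : Type*} (s : Finset ι) (f : ι → ℝ) :
    (∀ j ∈ s, ∃ z : ℤ, f j = z) → ∃ z : ℤ, ∑ j ∈ s, f j = z := by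
  classical
  induction s using Finset.induction with
  | empty => exact fun _ => ⟨0, by simp⟩
  | @insert x s hx ih =>
    intro h
    obtain ⟨z1, h1⟩ := h x (Finset.mem_insert_self x s)
    obtain ⟨z2, h2⟩ := ih fun j hj => h j (Finset.mem_insert_of_mem hj)
    exact ⟨z1 + z2, by rw [Finset.sum_insert hx, h1, h2]; push_cast; ring⟩

/-- If N is a positive integer divisible by the (nonzero) determinant of every square
submatrix of the nonnegative integer matrix a, w ∈ ℕ^n has all coordinates divisible by N,
and w = Σ_{j∈I1} α_j a_j + Σ_{i∈I2} β_i e_i where the columns a_j (j ∈ I1) together with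
the standard basis vectors e_i (i ∈ I2) are linearly independent over ℝ and α_j, β_i ≥ 0,
then all α_j and β_i are integers. -/
theorem stmt17 (n r : ℕ) (a : Fin n → Fin r → ℕ)
    (hcol : ∀ j, ∃ i, 0 < a i j)
    (N : ℕ) (hNpos : 0 < N)
    (hN : ∀ (k : ℕ) (rows : Fin k → Fin n) (cols : Fin k → Fin r),
      Function.Injective rows → Function.Injective cols →
      (Matrix.of fun s t => (a (rows s) (cols t) : ℤ)).det ≠ 0 →
      (Matrix.of fun s t => (a (rows s) (cols t) : ℤ)).det ∣ (N : ℤ))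
    (w : Fin n → ℕ) (hw : ∀ i, N ∣ w i)
    (I1 : Finset (Fin r)) (I2 : Finset (Fin n))
    (hind : LinearIndependent ℝ
      (fun x : ↥I1 ⊕ ↥I2 => Sum.elim
        (fun j : ↥I1 => fun i => (a i (j : Fin r) : ℝ))
        (fun i : ↥I2 => (Pi.single (i : Fin n) 1 : Fin n → ℝ)) x))
    (hbasis : I1.card + I2.card = n)
    (α : Fin r → ℝ) (hα : ∀ j ∈ I1, 0 ≤ α j)
    (β : Fin n → ℝ) (hβ : ∀ i ∈ I2, 0 ≤ β i)
    (hdecomp : ∀ i, (w i : ℝ) =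
      (∑ j ∈ I1, α j * (a i j : ℝ)) + (if i ∈ I2 then β i else 0)) :
    (∀ j ∈ I1, ∃ z : ℤ, α j = z) ∧ (∀ i ∈ I2, ∃ z : ℤ, β i = z) := by
  classical
  set k := I1.card with hk
  have hcompl : (I2ᶜ : Finset (Fin n)).card = k := by
    rw [Finset.card_compl, Fintype.card_fin]; omega
  let e1 : Fin k ≃ ↥I1 := I1.equivFin.symm
  let e2 : Fin k ≃ ↥(I2ᶜ : Finset (Fin n)) :=
    ((I2ᶜ : Finset (Fin n)).equivFin.trans (finCongr hcompl)).symm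
  let rows : Fin k → Fin n := fun s => (e2 s : Fin n)
  let cols : Fin k → Fin r := fun t => (e1 t : Fin r)
  have hrinj : Function.Injective rows :=
    Subtype.coe_injective.comp e2.injective
  have hcinj : Function.Injective cols :=
    Subtype.coe_injective.comp e1.injective
  have hrows_not : ∀ s, rows s ∉ I2 := fun s => Finset.mem_compl.mp (e2 s).2
  have hcols_mem : ∀ t, cols t ∈ I1 := fun t => (e1 t).2
  -- sum conversion
  have hsumI1 : ∀ f : Fin r → ℝ, ∑ j ∈ I1, f j = ∑ t : Fin k, f (cols t) := by
    intro f
    rw [← Finset.sum_coe_sort I1 f]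
    exact (Equiv.sum_comp e1 (fun j : ↥I1 => f j)).symm
  let M : Matrix (Fin k) (Fin k) ℝ := Matrix.of fun s t => (a (rows s) (cols t) : ℝ)
  let Mz : Matrix (Fin k) (Fin k) ℤ := Matrix.of fun s t => (a (rows s) (cols t) : ℤ)
  have hMmap : M = (Int.castRingHom ℝ).mapMatrix Mz := by
    ext s t; simp [M, Mz]
  -- M.mulVec (α ∘ cols) = w ∘ rows
  have hmul : M.mulVec (fun t => α (cols t)) = fun s => (w (rows s) : ℝ) := by
    funext s
    have := hdecomp (rows s)
    rw [if_neg (hrows_not s), add_zero, hsumI1 (fun j => α j * (a (rows s) j : ℝ))] at this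
    simp only [Matrix.mulVec, dotProduct, M, Matrix.of_apply]
    rw [this]
    exact Finset.sum_congr rfl fun t _ => mul_comm _ _
  -- det ≠ 0
  have hdet : M.det ≠ 0 := by
    intro h0
    obtain ⟨c, hc0, hc⟩ := Matrix.exists_mulVec_eq_zero_iff.mpr h0
    apply hc0
    set u : Fin n → ℝ := fun i => ∑ t : Fin k, c t * (a i (cols t) : ℝ) with hu
    have hunot : ∀ i, i ∉ I2 → u i = 0 := by
      intro i hi
      have : i = rows (e2.symm ⟨i, Finset.mem_compl.mpr hi⟩) := by
        simp [rows]
      rw [this]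
      have := congrFun hc (e2.symm ⟨i, Finset.mem_compl.mpr hi⟩)
      simpa [u, Matrix.mulVec, dotProduct, M, mul_comm] using this
    have hli := Fintype.linearIndependent_iff.mp hind
      (Sum.elim (fun j : ↥I1 => c (e1.symm j)) (fun i : ↥I2 => -(u i)))
    have hzero : ∀ x, Sum.elim (fun j : ↥I1 => c (e1.symm j)) (fun i : ↥I2 => -(u i)) x = 0 := by
      apply hli
      funext i
      rw [Fintype.sum_sum_type]
      simp only [Sum.elim_inl, Sum.elim_inr, Pi.add_apply, Finset.sum_apply,
        Pi.smul_apply, smul_eq_mul, Pi.zero_apply]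
      have h1 : ∑ j : ↥I1, c (e1.symm j) * (a i (j : Fin r) : ℝ) = u i := by
        rw [hu]
        rw [← Equiv.sum_comp e1 (fun j : ↥I1 => c (e1.symm j) * (a i (j : Fin r) : ℝ))]
        simp [cols]
      have h2 : ∑ i' : ↥I2, -(u i') * ((Pi.single (i' : Fin n) 1 : Fin n → ℝ) i) =
          if i ∈ I2 then -(u i) else 0 := by
        rw [Finset.sum_coe_sort I2 (fun i' => -(u i') * ((Pi.single (i' : Fin n) 1 : Fin n → ℝ) i))]
        by_cases hi : i ∈ I2
        · rw [if_pos hi, Finset.sum_eq_single i]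
          · simp
          · intro b hb hbi
            simp [Pi.single_apply, Ne.symm hbi]
          · intro h; exact absurd hi h
        · rw [if_neg hi]
          apply Finset.sum_eq_zero
          intro b hb
          have : i ≠ b := fun h => hi (h ▸ hb)
          simp [Pi.single_apply, this.symm]
      rw [h1, h2]
      by_cases hi : i ∈ I2
      · simp [hi]
      · simp [hi, hunot i hi]
    funext t
    have := hzero (Sum.inl (e1 t))
    simpa using this
  have hdetz : Mz.det ≠ 0 := by
    intro h0
    apply hdet
    rw [hMmap, ← RingHom.map_det, h0]
    simp
  have hdvdN : Mz.det ∣ (N : ℤ) := hN k rows cols hrinj hcinj hdetz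
  -- Cramer over ℤ
  let wz : Fin k → ℤ := fun s => (w (rows s) : ℤ)
  let yz : Fin k → ℤ := Mz.adjugate.mulVec wz
  have hyz : ∀ t, (yz t : ℝ) = (Mz.det : ℝ) * α (cols t) := by
    intro t
    have hadj : M.adjugate.mulVec (fun s => (w (rows s) : ℝ)) = (M.det • fun t => α (cols t)) := by
      rw [← hmul, Matrix.mulVec_mulVec, Matrix.adjugate_mul, Matrix.smul_mulVec,
        Matrix.one_mulVec]
    have hadjmap : ∀ s t, M.adjugate s t = (Mz.adjugate s t : ℝ) := by
      intro s t
      rw [hMmap, ← RingHom.map_adjugate]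
      simp
    have hdetmap : M.det = (Mz.det : ℝ) := by
      rw [hMmap, ← RingHom.map_det]
      simp
    have := congrFun hadj t
    simp only [Pi.smul_apply, smul_eq_mul, hdetmap] at this
    rw [← this]
    simp only [yz, Matrix.mulVec, dotProduct, wz]
    push_cast
    exact Finset.sum_congr rfl fun s _ => by rw [hadjmap]
  have hdvdy : ∀ t, Mz.det ∣ yz t := by
    intro t
    refine dvd_trans hdvdN ?_
    simp only [yz, Matrix.mulVec, dotProduct, wz]
    apply Finset.dvd_sum
    intro s _
    exact Dvd.dvd.mul_left (Int.natCast_dvd_natCast.mpr (hw (rows s))) _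
  have hdetR : (Mz.det : ℝ) ≠ 0 := Int.cast_ne_zero.mpr hdetz
  have halpha : ∀ j ∈ I1, ∃ z : ℤ, α j = z := by
    intro j hj
    obtain ⟨z, hz⟩ := hdvdy (e1.symm ⟨j, hj⟩)
    refine ⟨z, ?_⟩
    have h1 := hyz (e1.symm ⟨j, hj⟩)
    have h2 : cols (e1.symm ⟨j, hj⟩) = j := by simp [cols]
    rw [h2, hz] at h1
    push_cast at h1
    field_simp at h1
    rcases mul_eq_mul_left_iff.mp h1 with h1 | h1
    · linarith
    · exact absurd h1 (by rw [← Int.cast_det]; exact hdetR)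
  refine ⟨halpha, ?_⟩
  intro i hi
  have hsum : ∃ z : ℤ, ∑ j ∈ I1, α j * (a i j : ℝ) = z := by
    apply sumInt
    intro j hj
    obtain ⟨z, hz⟩ := halpha j hj
    exact ⟨z * a i j, by push_cast [hz]; ring⟩
  obtain ⟨z, hz⟩ := hsum
  have := hdecomp i
  rw [if_pos hi, hz] at this
  exact ⟨(w i : ℤ) - z, by push_cast; linarith⟩
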